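/- For every real number σ > 1 and every integer n ≥ 1, the point (2n − 1) • Θ₁ on the Weierstrass curve E_σ : y² = (x − 4(σ−1)²)³ + σ²(σ+1)²x² over ℝ, where Θ₁ = (8 − 8σ, 8σ² − 8), is an affine point, and its x-coordinate p satisfies p < 0. -/

import Mathlib

open WeierstrassCurve WeierstrassCurve.Affine

/-- The Weierstrass curve `E_σ : y² = (x − 4(σ−1)²)³ + σ²(σ+1)²x²` over `ℝ`. -/
def E (σ : ℝ) : WeierstrassCurve.Affine ℝ where
  a₁ := 0
  a₂ := σ ^ 2 * (σ + 1) ^ 2 - 12 * (σ - 1) ^ 2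
  a₃ := 0
  a₄ := 48 * (σ - 1) ^ 4
  a₆ := -64 * (σ - 1) ^ 6

namespace Stmt12Aux

/- Pure algebra: the chord identity. -/
lemma chord_master {a2 a4 a6 e x1 y1 x2 y2 L : ℝ}
    (hx : x1 ≠ x2)
    (h1 : y1 ^ 2 = x1 ^ 3 + a2 * x1 ^ 2 + a4 * x1 + a6)
    (h2 : y2 ^ 2 = x2 ^ 3 + a2 * x2 ^ 2 + a4 * x2 + a6)
    (he : e ^ 3 + a2 * e ^ 2 + a4 * e + a6 = 0)
    (hL : L * (x1 - x2) = y1 - y2) :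
    (x1 - e) * ((x2 - e) * ((L ^ 2 - a2 - x1 - x2) - e)) = (L * (e - x1) + y1) ^ 2 := by
  apply mul_right_cancel₀ (sub_ne_zero.mpr hx)
  linear_combination (-(e - x2)) * h1 + (e - x1) * h2
    - (e - x1) * (y2 + L * x2 + y1 - L * x1) * hL - (x1 - x2) * he

/- Pure algebra: the tangent identity. -/
lemma tangent_master {a2 a4 a6 e x1 y1 L : ℝ}
    (h1 : y1 ^ 2 = x1 ^ 3 + a2 * x1 ^ 2 + a4 * x1 + a6)
    (he : e ^ 3 + a2 * e ^ 2 + a4 * e + a6 = 0)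
    (hL : L * (2 * y1) = 3 * x1 ^ 2 + 2 * a2 * x1 + a4) :
    (x1 - e) ^ 2 * ((L ^ 2 - a2 - x1 - x1) - e) = (L * (e - x1) + y1) ^ 2 := by
  linear_combination (-1) * h1 - he - (e - x1) * hL

/- Pure algebra: when the chord passes through `(e, 0)` and the sum has `x`-coordinate `e`. -/
lemma lemB {a2 a4 a6 e x1 y1 x2 y2 L : ℝ}
    (hx : x1 ≠ x2)
    (h1 : y1 ^ 2 = x1 ^ 3 + a2 * x1 ^ 2 + a4 * x1 + a6)
    (h2 : y2 ^ 2 = x2 ^ 3 + a2 * x2 ^ 2 + a4 * x2 + a6)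
    (hL : L * (x1 - x2) = y1 - y2)
    (hnu : L * (e - x1) + y1 = 0)
    (hx3 : L ^ 2 - a2 - x1 - x2 = e) :
    (x1 - e) * (x2 - e) = 3 * e ^ 2 + 2 * a2 * e + a4 := by
  apply mul_right_cancel₀ (sub_ne_zero.mpr hx)
  linear_combination h1 - h2 + (y2 + L * x2 + y1 - L * x1) * hL
    - 2 * L * (x1 - x2) * hnu + (2 * e - x1 - x2) * (x1 - x2) * hx3

/- Pure algebra: when one of the summands is the `2`-torsion point `(e, 0)`. -/
lemma lemB' {a2 a4 a6 e x2 y2 L : ℝ}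
    (hx : e ≠ x2)
    (h2 : y2 ^ 2 = x2 ^ 3 + a2 * x2 ^ 2 + a4 * x2 + a6)
    (he : e ^ 3 + a2 * e ^ 2 + a4 * e + a6 = 0)
    (hL : L * (e - x2) = 0 - y2) :
    (x2 - e) * ((L ^ 2 - a2 - e - x2) - e) = 3 * e ^ 2 + 2 * a2 * e + a4 := by
  apply mul_right_cancel₀ (sub_ne_zero.mpr hx)
  linear_combination (-1) * he - h2 + (y2 + L * x2 - L * e) * hL

/-- The "egg" predicate: an affine point with `x`-coordinate `< e`. -/
def egg (e : ℝ) {W : WeierstrassCurve.Affine ℝ} : W.Point → Prop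
  | .zero => False
  | @Point.some _ _ _ x _ _ => x < e

lemma egg_zero (e : ℝ) {W : WeierstrassCurve.Affine ℝ} : ¬ egg e (0 : W.Point) := fun h => h

lemma egg_some (e : ℝ) {W : WeierstrassCurve.Affine ℝ} {x y : ℝ} (h : W.Nonsingular x y) :
    egg e (Point.some _ _ h) ↔ x < e := Iff.rfl

variable {W : WeierstrassCurve.Affine ℝ}

lemma negY_W (ha1 : W.a₁ = 0) (ha3 : W.a₃ = 0) (x y : ℝ) : W.negY x y = -y := by
  simp [negY, ha1, ha3]

lemma equation_W (ha1 : W.a₁ = 0) (ha3 : W.a₃ = 0) {x y : ℝ} (h : W.Equation x y) :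
    y ^ 2 = x ^ 3 + W.a₂ * x ^ 2 + W.a₄ * x + W.a₆ := by
  have h' := (W.equation_iff x y).mp h
  rw [ha1, ha3] at h'
  linear_combination h'

/-- If `(e, y)` is a nonsingular point with `y = 0`, then `f'(e) ≠ 0`. -/
lemma fp_ne_zero (ha1 : W.a₁ = 0) (ha3 : W.a₃ = 0) {e y : ℝ} (h : W.Nonsingular e y)
    (he : e ^ 3 + W.a₂ * e ^ 2 + W.a₄ * e + W.a₆ = 0) :
    3 * e ^ 2 + 2 * W.a₂ * e + W.a₄ ≠ 0 := by
  have hy : y = 0 := by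
    have h2 := equation_W ha1 ha3 h.1
    rw [he] at h2
    exact pow_eq_zero_iff (two_ne_zero) |>.mp h2
  have h' := (W.nonsingular_iff e y).mp h
  rcases h'.2 with h'' | h''
  · rw [ha1, hy, mul_zero] at h''
    exact fun hc => h'' hc.symm
  · exfalso
    apply h''
    rw [ha1, ha3, hy]
    ring

set_option maxHeartbeats 2000000 in
/-- The key parity property of the egg predicate under addition. -/
lemma egg_add (ha1 : W.a₁ = 0) (ha3 : W.a₃ = 0) {e : ℝ}
    (he : e ^ 3 + W.a₂ * e ^ 2 + W.a₄ * e + W.a₆ = 0)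
    (hfp : 0 ≤ 3 * e ^ 2 + 2 * W.a₂ * e + W.a₄)
    (P Q : W.Point) :
    egg e (P + Q) ↔ Xor' (egg e P) (egg e Q) := by
  rcases P with _ | @⟨x₁, y₁, h₁⟩
  · rw [← Point.zero_def, zero_add]
    simp [egg, Xor']
  rcases Q with _ | @⟨x₂, y₂, h₂⟩
  · rw [← Point.zero_def, add_zero]
    simp [egg, Xor', Xor]
  have heq1 := equation_W ha1 ha3 h₁.1
  have heq2 := equation_W ha1 ha3 h₂.1
  by_cases hY : x₁ = x₂ ∧ y₁ = W.negY x₂ y₂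
  · rw [Point.add_of_Y_eq hY.1 hY.2]
    have hx12 : x₁ = x₂ := hY.1
    simp [egg, Xor', hx12]
  · have hxy : x₁ = x₂ → y₁ ≠ W.negY x₂ y₂ := fun h h' => hY ⟨h, h'⟩
    rw [Point.add_some hY]
    rw [egg_some, egg_some, egg_some]
    unfold Xor'
    have hns3 : W.Nonsingular (W.addX x₁ x₂ (W.slope x₁ x₂ y₁ y₂))
        (W.addY x₁ x₂ y₁ (W.slope x₁ x₂ y₁ y₂)) := nonsingular_add h₁ h₂ hY
    have hx3 : W.addX x₁ x₂ (W.slope x₁ x₂ y₁ y₂)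
        = (W.slope x₁ x₂ y₁ y₂) ^ 2 - W.a₂ - x₁ - x₂ := by
      rw [addX, ha1]; ring
    rw [hx3] at hns3 ⊢
    set L : ℝ := W.slope x₁ x₂ y₁ y₂ with hLdef
    clear_value L
    clear hY
    by_cases hx : x₁ = x₂
    · -- tangent case
      have hy' : y₁ ≠ W.negY x₂ y₂ := hxy hx
      have hyy : y₁ = y₂ := Y_eq_of_Y_ne h₁.1 h₂.1 hx hy'
      have hy0 : y₁ ≠ 0 := by
        intro h0
        apply hy'
        rw [negY_W ha1 ha3, ← hyy, h0, neg_zero]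
      have h2y : (2 : ℝ) * y₁ ≠ 0 := by
        intro h; apply hy0; linarith
      have hL : L * (2 * y₁) = 3 * x₁ ^ 2 + 2 * W.a₂ * x₁ + W.a₄ := by
        rw [hLdef, slope_of_Y_ne hx hy', negY_W ha1 ha3, ha1]
        have hden : y₁ - -y₁ = 2 * y₁ := by ring
        rw [hden, zero_mul, sub_zero, div_mul_cancel₀ _ h2y]
      have hprod := tangent_master heq1 he hL
      have hx1e : x₁ ≠ e := by
        intro h
        apply hy0
        rw [h, he] at heq1
        exact pow_eq_zero_iff (two_ne_zero) |>.mp heq1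
      have hsq : (0:ℝ) < (x₁ - e) ^ 2 := by
        have h0 : x₁ - e ≠ 0 := sub_ne_zero.mpr hx1e
        positivity
      have hw : 0 ≤ (L ^ 2 - W.a₂ - x₁ - x₂) - e := by
        rw [← hx]
        nlinarith [sq_nonneg (L * (e - x₁) + y₁)]
      constructor
      · intro h; linarith
      · rintro (⟨h, h'⟩ | ⟨h, h'⟩)
        · exact absurd (by rwa [hx] at h) h'
        · exact absurd (by rwa [← hx] at h) h'
    · -- chord case
      have hL : L * (x₁ - x₂) = y₁ - y₂ := by
        rw [hLdef, slope_of_X_ne hx, div_mul_cancel₀ _ (sub_ne_zero.mpr hx)]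
      have hprod := chord_master hx heq1 heq2 he hL
      rcases lt_trichotomy x₁ e with hu | hu | hu
      · rcases lt_trichotomy x₂ e with hv | hv | hv
        · -- both in egg: sum not in egg
          have huv : 0 < (x₁ - e) * (x₂ - e) :=
            mul_pos_of_neg_of_neg (by linarith) (by linarith)
          have hw : 0 ≤ (L ^ 2 - W.a₂ - x₁ - x₂) - e := by
            nlinarith [sq_nonneg (L * (e - x₁) + y₁)]
          constructor
          · intro h; linarith
          · rintro (⟨h, h'⟩ | ⟨h, h'⟩)
            · exact absurd hv h'
            · exact absurd hu h'
        · -- x₂ = e, so Q = (e,0); sum in egg iff P in egg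
          have hy20 : y₂ = 0 := by
            rw [hv, he] at heq2
            exact pow_eq_zero_iff (two_ne_zero) |>.mp heq2
          have hfpne := fp_ne_zero ha1 ha3 (show W.Nonsingular e y₂ by rw [← hv]; exact h₂) he
          have hfppos : 0 < 3 * e ^ 2 + 2 * W.a₂ * e + W.a₄ :=
            lt_of_le_of_ne hfp (Ne.symm hfpne)
          have hL' : L * (e - x₁) = 0 - y₁ := by
            linear_combination (-1) * hL - L * hv + hy20
          have hene : e ≠ x₁ := fun h => hx (by rw [← h, hv])
          have hkey := lemB' hene heq1 he hL'
          have hxx : (L ^ 2 - W.a₂ - e - x₁) = (L ^ 2 - W.a₂ - x₁ - x₂) := by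
            rw [hv]; ring
          rw [hxx] at hkey
          have hw : (L ^ 2 - W.a₂ - x₁ - x₂) - e < 0 := by nlinarith
          constructor
          · intro _; left; exact ⟨hu, by rw [hv]; exact lt_irrefl e⟩
          · intro _; linarith
        · -- exactly one (x₁) in egg: sum in egg
          have huv : (x₁ - e) * (x₂ - e) < 0 :=
            mul_neg_of_neg_of_pos (by linarith) (by linarith)
          have hw : (L ^ 2 - W.a₂ - x₁ - x₂) - e ≤ 0 := by
            nlinarith [sq_nonneg (L * (e - x₁) + y₁)]
          have hwne : (L ^ 2 - W.a₂ - x₁ - x₂) - e ≠ 0 := by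
            intro hw0
            have hx3e : L ^ 2 - W.a₂ - x₁ - x₂ = e := by linarith
            have hns3' := hns3
            rw [hx3e] at hns3'
            have hfpne := fp_ne_zero ha1 ha3 hns3' he
            have hfppos : 0 < 3 * e ^ 2 + 2 * W.a₂ * e + W.a₄ :=
              lt_of_le_of_ne hfp (Ne.symm hfpne)
            have hs0 : L * (e - x₁) + y₁ = 0 := by
              have hsq : (L * (e - x₁) + y₁) ^ 2 = 0 := by
                rw [← hprod, hw0, mul_zero, mul_zero]
              exact pow_eq_zero_iff (two_ne_zero) |>.mp hsq
            have := lemB hx heq1 heq2 hL hs0 hx3e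
            nlinarith
          have hw' : (L ^ 2 - W.a₂ - x₁ - x₂) - e < 0 := lt_of_le_of_ne hw hwne
          constructor
          · intro _; left; exact ⟨hu, by linarith⟩
          · intro _; linarith
      · -- x₁ = e, so P = (e,0); sum in egg iff Q in egg
        have hy10 : y₁ = 0 := by
          rw [hu, he] at heq1
          exact pow_eq_zero_iff (two_ne_zero) |>.mp heq1
        have hfpne := fp_ne_zero ha1 ha3 (show W.Nonsingular e y₁ by rw [← hu]; exact h₁) he
        have hfppos : 0 < 3 * e ^ 2 + 2 * W.a₂ * e + W.a₄ :=
          lt_of_le_of_ne hfp (Ne.symm hfpne)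
        have hL' : L * (e - x₂) = 0 - y₂ := by
          linear_combination hL - L * hu + hy10
        have hene : e ≠ x₂ := fun h => hx (by rw [hu, h])
        have hkey := lemB' hene heq2 he hL'
        have hxx : (L ^ 2 - W.a₂ - e - x₂) = (L ^ 2 - W.a₂ - x₁ - x₂) := by
          rw [hu]
        rw [hxx] at hkey
        constructor
        · intro h
          right
          refine ⟨by nlinarith, ?_⟩
          intro h'; rw [hu] at h'; linarith
        · rintro (⟨h, h'⟩ | ⟨h, h'⟩)
          · rw [hu] at h; linarith
          · nlinarith
      · rcases lt_trichotomy x₂ e with hv | hv | hv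
        · -- exactly one (x₂) in egg: sum in egg
          have huv : (x₁ - e) * (x₂ - e) < 0 :=
            mul_neg_of_pos_of_neg (by linarith) (by linarith)
          have hw : (L ^ 2 - W.a₂ - x₁ - x₂) - e ≤ 0 := by
            nlinarith [sq_nonneg (L * (e - x₁) + y₁)]
          have hwne : (L ^ 2 - W.a₂ - x₁ - x₂) - e ≠ 0 := by
            intro hw0
            have hx3e : L ^ 2 - W.a₂ - x₁ - x₂ = e := by linarith
            have hns3' := hns3
            rw [hx3e] at hns3'
            have hfpne := fp_ne_zero ha1 ha3 hns3' he
            have hfppos : 0 < 3 * e ^ 2 + 2 * W.a₂ * e + W.a₄ :=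
              lt_of_le_of_ne hfp (Ne.symm hfpne)
            have hs0 : L * (e - x₁) + y₁ = 0 := by
              have hsq : (L * (e - x₁) + y₁) ^ 2 = 0 := by
                rw [← hprod, hw0, mul_zero, mul_zero]
              exact pow_eq_zero_iff (two_ne_zero) |>.mp hsq
            have := lemB hx heq1 heq2 hL hs0 hx3e
            nlinarith
          have hw' : (L ^ 2 - W.a₂ - x₁ - x₂) - e < 0 := lt_of_le_of_ne hw hwne
          constructor
          · intro _; right; exact ⟨hv, by linarith⟩
          · intro _; linarith
        · -- x₂ = e, so Q = (e,0); but x₁ > e: sum not in egg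
          have hy20 : y₂ = 0 := by
            rw [hv, he] at heq2
            exact pow_eq_zero_iff (two_ne_zero) |>.mp heq2
          have hfpne := fp_ne_zero ha1 ha3 (show W.Nonsingular e y₂ by rw [← hv]; exact h₂) he
          have hfppos : 0 < 3 * e ^ 2 + 2 * W.a₂ * e + W.a₄ :=
            lt_of_le_of_ne hfp (Ne.symm hfpne)
          have hL' : L * (e - x₁) = 0 - y₁ := by
            linear_combination (-1) * hL - L * hv + hy20
          have hene : e ≠ x₁ := fun h => hx (by rw [← h, hv])
          have hkey := lemB' hene heq1 he hL'
          have hxx : (L ^ 2 - W.a₂ - e - x₁) = (L ^ 2 - W.a₂ - x₁ - x₂) := by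
            rw [hv]; ring
          rw [hxx] at hkey
          constructor
          · intro h
            exfalso; nlinarith
          · rintro (⟨h, h'⟩ | ⟨h, h'⟩)
            · linarith
            · rw [hv] at h; linarith
        · -- neither in egg: sum not in egg
          have huv : 0 < (x₁ - e) * (x₂ - e) := mul_pos (by linarith) (by linarith)
          have hw : 0 ≤ (L ^ 2 - W.a₂ - x₁ - x₂) - e := by
            nlinarith [sq_nonneg (L * (e - x₁) + y₁)]
          constructor
          · intro h; linarith
          · rintro (⟨h, h'⟩ | ⟨h, h'⟩)
            · linarith
            · linarith

/-- The cubic `f` of the curve `E σ`. -/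
noncomputable def fc (σ x : ℝ) : ℝ :=
  x ^ 3 + (σ ^ 2 * (σ + 1) ^ 2 - 12 * (σ - 1) ^ 2) * x ^ 2
    + 48 * (σ - 1) ^ 4 * x + -64 * (σ - 1) ^ 6

lemma fc_cont (σ : ℝ) : Continuous (fc σ) := by
  unfold fc; fun_prop

end Stmt12Aux

open Stmt12Aux in
set_option maxHeartbeats 2000000 in
/-- For every real `σ > 1` and every `n ≥ 1`, the point `(2n − 1) • Θ₁` on `E_σ`, where
`Θ₁ = (8 − 8σ, 8σ² − 8)`, is an affine point whose `x`-coordinate is negative. -/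
theorem stmt_12 (σ : ℝ) (hσ : 1 < σ)
    (hΘ : (E σ).Nonsingular (8 - 8 * σ) (8 * σ ^ 2 - 8))
    (n : ℕ) (hn : 1 ≤ n) :
    ∃ (p q : ℝ) (h : (E σ).Nonsingular p q),
      (2 * n - 1) • Point.some _ _ hΘ = Point.some _ _ h ∧ p < 0 := by
  have ha1 : (E σ).a₁ = 0 := rfl
  have ha2 : (E σ).a₂ = σ ^ 2 * (σ + 1) ^ 2 - 12 * (σ - 1) ^ 2 := rfl
  have ha3 : (E σ).a₃ = 0 := rfl
  have ha4 : (E σ).a₄ = 48 * (σ - 1) ^ 4 := rfl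
  have ha6 : (E σ).a₆ = -64 * (σ - 1) ^ 6 := rfl
  have hfc : ∀ x : ℝ, fc σ x = x ^ 3 + (E σ).a₂ * x ^ 2 + (E σ).a₄ * x + (E σ).a₆ := by
    intro x; rw [ha2, ha4, ha6]; unfold fc; ring
  have hσ0 : σ - 1 ≠ 0 := by intro h; nlinarith
  have hσ1 : (0:ℝ) < (σ - 1) ^ 6 := by positivity
  have hf0 : fc σ 0 < 0 := by
    unfold fc
    nlinarith [hσ1]
  -- a bound beyond which fc is positive
  set A2 : ℝ := σ ^ 2 * (σ + 1) ^ 2 - 12 * (σ - 1) ^ 2 with hA2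
  set A4 : ℝ := 48 * (σ - 1) ^ 4 with hA4
  set A6 : ℝ := -64 * (σ - 1) ^ 6 with hA6
  have hfc' : ∀ x : ℝ, fc σ x = x ^ 3 + A2 * x ^ 2 + A4 * x + A6 := by
    intro x; unfold fc; rw [hA2, hA4, hA6]
  set M : ℝ := 1 + |A2| + |A4| + |A6| with hM
  have h1 := abs_nonneg A2
  have h2 := abs_nonneg A4
  have h3 := abs_nonneg A6
  have hM1 : 1 ≤ M := by rw [hM]; linarith
  have hMpos : (0:ℝ) < M := by linarith
  have hfM : 0 < fc σ M := by
    have b1 := neg_abs_le A2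
    have b2 := neg_abs_le A4
    have b3 := neg_abs_le A6
    rw [hfc']
    nlinarith [sq_nonneg M, mul_le_mul_of_nonneg_right b1 (sq_nonneg M),
      mul_le_mul_of_nonneg_right b2 (le_of_lt hMpos), sq_nonneg (M - 1),
      mul_pos hMpos hMpos]
  -- the set of nonnegative roots
  set S : Set ℝ := Set.Ici (0:ℝ) ∩ (fc σ) ⁻¹' {0} with hS
  have hSclosed : IsClosed S := isClosed_Ici.inter (isClosed_singleton.preimage (fc_cont σ))
  have hSne : S.Nonempty := by
    have h0M : (0:ℝ) ≤ M := by linarith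
    have hiv := intermediate_value_Icc h0M (fc_cont σ).continuousOn
    have hmem : (0:ℝ) ∈ Set.Icc (fc σ 0) (fc σ M) := ⟨le_of_lt hf0, le_of_lt hfM⟩
    obtain ⟨c, hc1, hc2⟩ := hiv hmem
    exact ⟨c, hc1.1, hc2⟩
  have hSbdd : BddBelow S := ⟨0, fun x hx => hx.1⟩
  set e : ℝ := sInf S with he_def
  have heS : e ∈ S := hSclosed.csInf_mem hSne hSbdd
  have he0 : 0 ≤ e := heS.1
  have hfe : fc σ e = 0 := heS.2
  have hepos : 0 < e := by
    rcases lt_or_eq_of_le he0 with h | h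
    · exact h
    · exfalso; rw [← h] at hfe; linarith
  have hneg : ∀ x : ℝ, 0 ≤ x → x < e → fc σ x < 0 := by
    intro x hx hxe
    rcases lt_trichotomy (fc σ x) 0 with h | h | h
    · exact h
    · exfalso
      have hmemS : x ∈ S := ⟨hx, h⟩
      have := csInf_le hSbdd hmemS
      linarith
    · exfalso
      have hiv := intermediate_value_Icc hx (fc_cont σ).continuousOn
      have hmem : (0:ℝ) ∈ Set.Icc (fc σ 0) (fc σ x) := ⟨le_of_lt hf0, le_of_lt h⟩
      obtain ⟨c, hc1, hc2⟩ := hiv hmem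
      have hmemS : c ∈ S := ⟨hc1.1, hc2⟩
      have := csInf_le hSbdd hmemS
      linarith [hc1.2]
  -- derivative at e is nonnegative
  have hfp : 0 ≤ 3 * e ^ 2 + 2 * A2 * e + A4 := by
    set q : ℝ → ℝ := fun x => x ^ 2 + (A2 + e) * x + (A4 + A2 * e + e ^ 2) with hq
    have hqcont : Continuous q := by rw [hq]; fun_prop
    have hqpos : ∀ x ∈ Set.Ico 0 e, 0 ≤ q x := by
      intro x hx
      have hfx := hneg x hx.1 hx.2
      have hfact : fc σ x = (x - e) * q x + fc σ e := by
        rw [hfc' x, hfc' e, hq]; ring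
      rw [hfe, add_zero] at hfact
      have hxe : x - e < 0 := by linarith [hx.2]
      by_contra hqx
      push_neg at hqx
      nlinarith
    have hclos : e ∈ closure (Set.Ico 0 e) := by
      rw [closure_Ico (ne_of_lt hepos)]
      exact ⟨he0, le_refl e⟩
    haveI : (nhdsWithin e (Set.Ico 0 e)).NeBot := mem_closure_iff_nhdsWithin_neBot.mp hclos
    have htend : Filter.Tendsto q (nhdsWithin e (Set.Ico 0 e)) (nhds (q e)) :=
      (hqcont.continuousAt).continuousWithinAt
    have hqe : 0 ≤ q e := by
      apply ge_of_tendsto htend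
      filter_upwards [self_mem_nhdsWithin] with x hx
      exact hqpos x hx
    have hqe' : q e = 3 * e ^ 2 + 2 * A2 * e + A4 := by rw [hq]; ring
    linarith [hqe' ▸ hqe]
  -- hypotheses of the key lemma, phrased with the curve coefficients
  have heW : e ^ 3 + (E σ).a₂ * e ^ 2 + (E σ).a₄ * e + (E σ).a₆ = 0 := by
    rw [← hfc e]; exact hfe
  have hfpW : 0 ≤ 3 * e ^ 2 + 2 * (E σ).a₂ * e + (E σ).a₄ := by
    rw [ha2, ha4]; exact hfp
  have hkey := egg_add ha1 ha3 heW hfpW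
  -- Θ is in the egg
  have hΘegg : egg e (Point.some _ _ hΘ) := by
    rw [egg_some]
    have h8 : 8 - 8 * σ < 0 := by linarith
    linarith
  -- 2 • Θ is not in the egg
  have h2Θ : ¬ egg e (2 • Point.some _ _ hΘ) := by
    rw [two_smul]
    intro h
    rw [hkey] at h
    rcases h with ⟨h, h'⟩ | ⟨h, h'⟩ <;> exact h' h
  -- odd multiples are in the egg
  have hodd : ∀ m : ℕ, egg e ((2 * m + 1) • Point.some _ _ hΘ) := by
    intro m
    induction m with
    | zero => simpa using hΘegg
    | succ k ih =>
      have hnat : 2 * (k + 1) + 1 = (2 * k + 1) + 2 := by ring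
      rw [hnat, add_smul, hkey]
      left
      exact ⟨ih, h2Θ⟩
  have h2n : 2 * n - 1 = 2 * (n - 1) + 1 := by omega
  have hfinal := hodd (n - 1)
  rw [← h2n] at hfinal
  rcases hP : ((2 * n - 1) • Point.some _ _ hΘ) with _ | @⟨p, q', hpq⟩
  · rw [hP] at hfinal
    exact absurd hfinal (egg_zero e)
  · rw [hP] at hfinal
    rw [egg_some] at hfinal
    refine ⟨p, q', hpq, rfl, ?_⟩
    by_contra hp
    push_neg at hp
    have heqp := equation_W ha1 ha3 hpq.1
    rw [← hfc p] at heqp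
    have hneg' := hneg p hp hfinal
    nlinarith [sq_nonneg q']
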